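/- arXiv:2207.05323 — 2 statements merged into one kernel-verified Lean document; each statement's English description precedes it below -/
import Mathlib

section
/- Let M be an n×n integer matrix with nonzero determinant and Smith normal form M = U D V with U, V unimodular integer matrices and D = diag(d_1,...,d_n). For a binomial system x^{m_i} = c_i (rows m_i of M, c_i real nonzero), the number of real solutions in (R\{0})^n equals 2^k, where k is the number of even diagonal entries d_i for which the corresponding transformed constant is positive, provided every even d_i with negative transformed constant forces zero solutions; in particular, the number of real torus solutions is either 0 or a power of 2. -/
private lemma zmod2_cases (a : ZMod 2) : a = 0 ∨ a = 1 := by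
  revert a; decide

private lemma real_abs_zpow (a : ℝ) (t : ℤ) : |a ^ t| = |a| ^ t := by
  rw [← Real.norm_eq_abs, ← Real.norm_eq_abs, norm_zpow]

private lemma intCast_zmod2_eq_zero_iff_even (t : ℤ) : ((t : ZMod 2) = 0) ↔ Even t := by
  rw [ZMod.intCast_zmod_eq_zero_iff_dvd, Int.even_iff, Int.dvd_iff_emod_eq_zero]
  norm_num

private lemma neg_one_zpow_eq_one_iff (t : ℤ) : ((-1 : ℝ) ^ t = 1) ↔ Even t := by
  constructor
  · intro h
    rcases Int.even_or_odd t with he | ho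
    · exact he
    · rw [ho.neg_one_zpow] at h; norm_num at h
  · intro h; exact h.neg_one_zpow

private lemma neg_one_prod_zpow {n : ℕ} (t : Fin n → ℤ) :
    (∏ j, (-1 : ℝ) ^ (t j)) = (-1 : ℝ) ^ (∑ j, t j) := by
  induction (Finset.univ : Finset (Fin n)) using Finset.cons_induction with
  | empty => simp
  | cons a s ha ih => rw [Finset.sum_cons, Finset.prod_cons, zpow_add₀ (by norm_num), ih]

/-- Key parity lemma. -/
private lemma key_iff {n : ℕ} (m e : Fin n → ℤ) :
    (∏ j, ((-1 : ℝ) ^ (e j)) ^ (m j)) = 1 ↔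
      (∑ j, ((m j : ZMod 2) * ((e j : ℤ) : ZMod 2))) = 0 := by
  have h1 : (∏ j, ((-1 : ℝ) ^ (e j)) ^ (m j)) = (-1 : ℝ) ^ (∑ j, e j * m j) := by
    rw [← neg_one_prod_zpow]
    exact Finset.prod_congr rfl fun j _ => (zpow_mul (-1 : ℝ) (e j) (m j)).symm
  rw [h1, neg_one_zpow_eq_one_iff, ← intCast_zmod2_eq_zero_iff_even]
  push_cast
  rw [Finset.sum_congr rfl fun j _ => mul_comm ((e j : ZMod 2)) ((m j : ZMod 2))]

private lemma mulVec_cast_zero {n : ℕ} (M : Matrix (Fin n) (Fin n) ℤ) (hM : M.det ≠ 0)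
    (v : Fin n → ℝ) (h : (M.map (Int.cast : ℤ → ℝ)).mulVec v = 0) : v = 0 := by
  set A := M.map (Int.cast : ℤ → ℝ)
  have hd : A.det ≠ 0 := by
    have : A.det = ((M.det : ℤ) : ℝ) := (RingHom.map_det (Int.castRingHom ℝ) M).symm
    rw [this]; exact_mod_cast hM
  have hinv := Matrix.nonsing_inv_mul A (isUnit_iff_ne_zero.2 hd)
  calc v = (A⁻¹ * A).mulVec v := by rw [hinv, Matrix.one_mulVec]
  _ = A⁻¹.mulVec (A.mulVec v) := by rw [Matrix.mulVec_mulVec]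
  _ = 0 := by rw [h, Matrix.mulVec_zero]

/-- Let `M` be an `n × n` integer matrix of nonzero determinant, with Smith
normal form `M = U D V` where `U, V` are unimodular and `D` is diagonal. Then
the number of solutions in `(ℝ \ {0})^n` of the binomial system
`x^{m_i} = c_i` (with rows `m_i` of `M` and nonzero real constants `c_i`) is
either `0` or a power of `2`. -/
theorem real_binomial_system_card_zero_or_pow_two {n : ℕ}
    (M U V : Matrix (Fin n) (Fin n) ℤ) (d : Fin n → ℤ)
    (hM : M.det ≠ 0)
    (hU : U.det = 1 ∨ U.det = -1) (hV : V.det = 1 ∨ V.det = -1)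
    (hSNF : M = U * Matrix.diagonal d * V)
    (c : Fin n → ℝ) (hc : ∀ i, c i ≠ 0) :
    {x : Fin n → ℝ | (∀ i, x i ≠ 0) ∧ ∀ i, (∏ j, x j ^ (M i j)) = c i}.ncard = 0 ∨
      ∃ k : ℕ,
        {x : Fin n → ℝ | (∀ i, x i ≠ 0) ∧ ∀ i, (∏ j, x j ^ (M i j)) = c i}.ncard =
          2 ^ k := by
  classical
  set S : Set (Fin n → ℝ) :=
    {x : Fin n → ℝ | (∀ i, x i ≠ 0) ∧ ∀ i, (∏ j, x j ^ (M i j)) = c i} with hSdef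
  rcases Set.eq_empty_or_nonempty S with hS | ⟨x₀, hx₀⟩
  · left; rw [hS, Set.ncard_empty]
  right
  -- the kernel set
  set K : Set (Fin n → ℝ) :=
    {y : Fin n → ℝ | (∀ i, y i ≠ 0) ∧ ∀ i, (∏ j, y j ^ (M i j)) = 1} with hKdef
  obtain ⟨hx₀ne, hx₀eq⟩ := hx₀
  -- Step 1: S is the image of K under multiplication by x₀
  have hSK : S = (fun y : Fin n → ℝ => fun j => y j * x₀ j) '' K := by
    ext x
    constructor
    · rintro ⟨hxne, hxeq⟩
      refine ⟨fun j => x j / x₀ j, ⟨fun j => div_ne_zero (hxne j) (hx₀ne j), fun i => ?_⟩, ?_⟩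
      · have : (∏ j, (x j / x₀ j) ^ (M i j)) =
            (∏ j, x j ^ (M i j)) / (∏ j, x₀ j ^ (M i j)) := by
          rw [← Finset.prod_div_distrib]
          exact Finset.prod_congr rfl fun j _ => div_zpow _ _ _
        rw [this, hxeq i, hx₀eq i, div_self (hc i)]
      · funext j; exact div_mul_cancel₀ (x j) (hx₀ne j)
    · rintro ⟨y, ⟨hyne, hyeq⟩, rfl⟩
      refine ⟨fun j => mul_ne_zero (hyne j) (hx₀ne j), fun i => ?_⟩
      have : (∏ j, (y j * x₀ j) ^ (M i j)) =
          (∏ j, y j ^ (M i j)) * (∏ j, x₀ j ^ (M i j)) := by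
        rw [← Finset.prod_mul_distrib]
        exact Finset.prod_congr rfl fun j _ => mul_zpow _ _ _
      rw [this, hyeq i, hx₀eq i, one_mul]
  have hinj1 : Function.Injective (fun y : Fin n → ℝ => fun j => y j * x₀ j) := by
    intro y y' h
    funext j
    exact mul_right_cancel₀ (hx₀ne j) (congrFun h j)
  -- Step 2: every element of K has entries ±1
  have hpm : ∀ y ∈ K, ∀ j, y j = 1 ∨ y j = -1 := by
    rintro y ⟨hyne, hyeq⟩ j
    have hv : (fun j => Real.log |y j|) = 0 := by
      apply mulVec_cast_zero M hM
      funext i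
      have h1 : ∀ j, |y j| ^ (M i j) ≠ 0 :=
        fun j => zpow_ne_zero _ (abs_ne_zero.mpr (hyne j))
      have : (∑ j, (M i j : ℝ) * Real.log |y j|) = 0 := by
        have h2 : ∀ j, (M i j : ℝ) * Real.log |y j| = Real.log (|y j| ^ (M i j)) := by
          intro j; rw [Real.log_zpow]
        rw [Finset.sum_congr rfl fun j _ => h2 j,
          ← Real.log_prod fun j _ => h1 j]
        have : (∏ j, |y j| ^ (M i j)) = |∏ j, y j ^ (M i j)| := by
          rw [Finset.abs_prod]
          exact Finset.prod_congr rfl fun j _ => (real_abs_zpow _ _).symm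
        rw [this, hyeq i, abs_one, Real.log_one]
      simpa [Matrix.mulVec, dotProduct, Matrix.map_apply] using this
    have hlog : Real.log |y j| = 0 := congrFun hv j
    rcases Real.log_eq_zero.mp hlog with h1 | h1 | h1
    · exact absurd h1 (abs_ne_zero.mpr (hyne j))
    · rcases (abs_eq (by norm_num : (0:ℝ) ≤ 1)).mp h1 with h2 | h2
      · exact Or.inl h2
      · exact Or.inr h2
    · nlinarith [abs_nonneg (y j)]
  -- the ZMod 2 kernel
  set L : Submodule (ZMod 2) (Fin n → ZMod 2) :=
    LinearMap.ker (Matrix.mulVecLin (M.map (Int.cast : ℤ → ZMod 2))) with hLdef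
  set g : (Fin n → ZMod 2) → (Fin n → ℝ) :=
    fun ε => fun j => if ε j = 0 then (1 : ℝ) else -1 with hgdef
  -- Step 3: K = g '' L
  have hKL : K = g '' (L : Set (Fin n → ZMod 2)) := by
    ext y
    constructor
    · intro hy
      obtain ⟨hyne, hyeq⟩ := hy
      have hpmy := hpm y ⟨hyne, hyeq⟩
      set e : Fin n → ℤ := fun j => if y j = 1 then 0 else 1 with hedef
      have hye : ∀ j, y j = (-1 : ℝ) ^ (e j) := by
        intro j
        rcases hpmy j with h | h
        · simp [hedef, h]
        · have hne : y j ≠ 1 := by rw [h]; norm_num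
          have he1 : e j = 1 := by simp [hedef, hne]
          rw [he1, h, zpow_one]
      refine ⟨fun j => ((e j : ℤ) : ZMod 2), ?_, ?_⟩
      · rw [SetLike.mem_coe, LinearMap.mem_ker]
        funext i
        have hprod : (∏ j, ((-1 : ℝ) ^ (e j)) ^ (M i j)) = 1 := by
          rw [show (∏ j, ((-1 : ℝ) ^ (e j)) ^ (M i j)) = ∏ j, y j ^ (M i j) from
            Finset.prod_congr rfl fun j _ => by rw [← hye j]]
          exact hyeq i
        have := (key_iff (fun j => M i j) e).mp hprod
        simpa [Matrix.mulVecLin, Matrix.mulVec, dotProduct, Matrix.map_apply] using this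
      · funext j
        rcases hpmy j with h | h
        · have : e j = 0 := by simp [hedef, h]
          simp [hgdef, this, h]
        · have hne : y j ≠ 1 := by rw [h]; norm_num
          have he1 : e j = 1 := by simp [hedef, hne]
          have h2 : ((e j : ℤ) : ZMod 2) ≠ 0 := by rw [he1]; decide
          simp [hgdef, h2, h]
    · rintro ⟨ε, hε, rfl⟩
      rw [SetLike.mem_coe, LinearMap.mem_ker] at hε
      set e : Fin n → ℤ := fun j => if ε j = 0 then 0 else 1 with hedef
      have hge : ∀ j, g ε j = (-1 : ℝ) ^ (e j) := by
        intro j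
        by_cases h : ε j = 0 <;> simp [hgdef, hedef, h]
      have hcast : ∀ j, ((e j : ℤ) : ZMod 2) = ε j := by
        intro j
        rcases zmod2_cases (ε j) with h | h
        · simp [hedef, h]
        · have hne : ε j ≠ 0 := by rw [h]; decide
          simp [hedef, hne, h]
      constructor
      · intro j
        by_cases h : ε j = 0 <;> simp [hgdef, h]
      · intro i
        have h0 : (∑ j, ((M i j : ZMod 2) * ((e j : ℤ) : ZMod 2))) = 0 := by
          have := congrFun hε i
          simpa [Matrix.mulVecLin, Matrix.mulVec, dotProduct, Matrix.map_apply,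
            hcast] using this
        have := (key_iff (fun j => M i j) e).mpr h0
        rw [← this]
        exact Finset.prod_congr rfl fun j _ => by rw [hge j]
  have hinj2 : Function.Injective g := by
    intro ε ε' h
    funext j
    have hj := congrFun h j
    rcases zmod2_cases (ε j) with h1 | h1 <;> rcases zmod2_cases (ε' j) with h2 | h2 <;>
      simp [hgdef, h1, h2] at hj ⊢ <;> first | rfl | norm_num at hj
  -- Step 4: count
  have hcard : S.ncard = Nat.card L := by
    rw [hSK, Set.ncard_image_of_injective _ hinj1, hKL,
      Set.ncard_image_of_injective _ hinj2, ← Nat.card_coe_set_eq]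
    rfl
  refine ⟨Module.finrank (ZMod 2) L, ?_⟩
  rw [hcard, Nat.card_eq_fintype_card, Module.card_eq_pow_finrank (K := ZMod 2) (V := L), ZMod.card]
end

section
/- The system F = ⟨f_1, f_2⟩ with f_1 = -1 - 24000y + x^3 and f_2 = -9 + 50xy - y^2 has exactly 4 solutions in (R\{0})^2. -/
noncomputable def gpoly : ℝ → ℝ := fun x =>
  -x^6 + 1200000*x^4 + 2*x^3 - 1200000*x - 5184000001

lemma gpoly_cont : Continuous gpoly := by
  unfold gpoly; fun_prop

lemma gpoly_deriv (x : ℝ) :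
    HasDerivAt gpoly (-6*x^5 + 4800000*x^3 + 6*x^2 - 1200000) x := by
  unfold gpoly
  have h : HasDerivAt (fun x : ℝ =>
      -x^6 + 1200000*x^4 + 2*x^3 - 1200000*x - 5184000001)
      (-(6*x^5) + 1200000*(4*x^3) + 2*(3*x^2) - 1200000*1 - 0) x :=
    ((((hasDerivAt_pow 6 x).neg.add
      ((hasDerivAt_pow 4 x).const_mul 1200000)).add
      ((hasDerivAt_pow 3 x).const_mul 2)).sub
      ((hasDerivAt_id x).const_mul 1200000)).sub (hasDerivAt_const x _)
  convert h using 1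
  ring

-- derivative sign lemmas
lemma gderiv_pos_left {x : ℝ} (hx : x ≤ -1000) :
    0 < -6*x^5 + 4800000*x^3 + 6*x^2 - 1200000 := by
  nlinarith [sq_nonneg x, sq_nonneg (x+1000), sq_nonneg (x^2 - 1000000),
    mul_nonneg (mul_nonneg (sq_nonneg x) (sq_nonneg x)) (sq_nonneg (x+1000))]

lemma gderiv_pos_right {x : ℝ} (h1 : 8 ≤ x) (h2 : x ≤ 894) :
    0 < -6*x^5 + 4800000*x^3 + 6*x^2 - 1200000 := by
  nlinarith [mul_nonneg (mul_nonneg (by linarith : (0:ℝ) ≤ x - 8) (by linarith : (0:ℝ) ≤ 894 - x)) (sq_nonneg x),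
    sq_nonneg x, mul_nonneg (by linarith : (0:ℝ) ≤ x - 8) (by linarith : (0:ℝ) ≤ 894 - x)]

lemma gderiv_neg_mid {x : ℝ} (h1 : -894 ≤ x) (h2 : x ≤ -8) :
    -6*x^5 + 4800000*x^3 + 6*x^2 - 1200000 < 0 := by
  nlinarith [mul_nonneg (mul_nonneg (by linarith : (0:ℝ) ≤ x + 894) (by linarith : (0:ℝ) ≤ -8 - x)) (sq_nonneg x),
    sq_nonneg x, mul_nonneg (by linarith : (0:ℝ) ≤ x + 894) (by linarith : (0:ℝ) ≤ -8 - x)]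

lemma gderiv_neg_far {x : ℝ} (hx : 1000 ≤ x) :
    -6*x^5 + 4800000*x^3 + 6*x^2 - 1200000 < 0 := by
  nlinarith [sq_nonneg x, sq_nonneg (x - 1000),
    mul_nonneg (mul_nonneg (sq_nonneg x) (sq_nonneg x)) (sq_nonneg (x-1000))]

-- sign on gaps
lemma gpos_gapL {x : ℝ} (h1 : -1000 ≤ x) (h2 : x ≤ -894) : 0 < gpoly x := by
  unfold gpoly
  nlinarith [mul_nonneg (mul_nonneg (by linarith : (0:ℝ) ≤ x + 1000) (by linarith : (0:ℝ) ≤ -894 - x)) (sq_nonneg x),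
    mul_nonneg (by linarith : (0:ℝ) ≤ x + 1000) (by linarith : (0:ℝ) ≤ -894 - x), sq_nonneg x,
    mul_nonneg (mul_nonneg (mul_nonneg (by linarith : (0:ℝ) ≤ x + 1000) (by linarith : (0:ℝ) ≤ -894 - x)) (sq_nonneg x)) (sq_nonneg x)]

lemma gneg_gapM {x : ℝ} (h1 : (-8:ℝ) ≤ x) (h2 : x ≤ 8) : gpoly x < 0 := by
  unfold gpoly
  nlinarith [mul_nonneg (mul_nonneg (by linarith : (0:ℝ) ≤ x + 8) (by linarith : (0:ℝ) ≤ 8 - x)) (sq_nonneg x),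
    mul_nonneg (by linarith : (0:ℝ) ≤ x + 8) (by linarith : (0:ℝ) ≤ 8 - x), sq_nonneg x,
    mul_nonneg (mul_nonneg (mul_nonneg (by linarith : (0:ℝ) ≤ x + 8) (by linarith : (0:ℝ) ≤ 8 - x)) (sq_nonneg x)) (sq_nonneg x)]

lemma gpos_gapR {x : ℝ} (h1 : (894:ℝ) ≤ x) (h2 : x ≤ 1000) : 0 < gpoly x := by
  unfold gpoly
  nlinarith [mul_nonneg (mul_nonneg (by linarith : (0:ℝ) ≤ x - 894) (by linarith : (0:ℝ) ≤ 1000 - x)) (sq_nonneg x),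
    mul_nonneg (by linarith : (0:ℝ) ≤ x - 894) (by linarith : (0:ℝ) ≤ 1000 - x), sq_nonneg x,
    mul_nonneg (mul_nonneg (mul_nonneg (by linarith : (0:ℝ) ≤ x - 894) (by linarith : (0:ℝ) ≤ 1000 - x)) (sq_nonneg x)) (sq_nonneg x)]

example : True := trivial

lemma gmonoL : StrictMonoOn gpoly (Set.Iic (-1000)) := by
  apply strictMonoOn_of_deriv_pos (convex_Iic _) gpoly_cont.continuousOn
  intro x hx
  rw [interior_Iic, Set.mem_Iio] at hx
  rw [(gpoly_deriv x).deriv]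
  exact gderiv_pos_left hx.le

lemma gantiM : StrictAntiOn gpoly (Set.Icc (-894) (-8)) := by
  apply strictAntiOn_of_deriv_neg (convex_Icc _ _) gpoly_cont.continuousOn
  intro x hx
  rw [interior_Icc, Set.mem_Ioo] at hx
  rw [(gpoly_deriv x).deriv]
  exact gderiv_neg_mid hx.1.le hx.2.le

lemma gmonoR : StrictMonoOn gpoly (Set.Icc 8 894) := by
  apply strictMonoOn_of_deriv_pos (convex_Icc _ _) gpoly_cont.continuousOn
  intro x hx
  rw [interior_Icc, Set.mem_Ioo] at hx
  rw [(gpoly_deriv x).deriv]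
  exact gderiv_pos_right hx.1.le hx.2.le

lemma gantiR : StrictAntiOn gpoly (Set.Ici 1000) := by
  apply strictAntiOn_of_deriv_neg (convex_Ici _) gpoly_cont.continuousOn
  intro x hx
  rw [interior_Ici, Set.mem_Ioi] at hx
  rw [(gpoly_deriv x).deriv]
  exact gderiv_neg_far hx.le

lemma groots : ∃ x1 x2 x3 x4 : ℝ,
    x1 ∈ Set.Icc (-1100:ℝ) (-1000) ∧ gpoly x1 = 0 ∧
    x2 ∈ Set.Icc (-894:ℝ) (-8) ∧ gpoly x2 = 0 ∧
    x3 ∈ Set.Icc (8:ℝ) 894 ∧ gpoly x3 = 0 ∧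
    x4 ∈ Set.Icc (1000:ℝ) 1100 ∧ gpoly x4 = 0 := by
  obtain ⟨x1, h1m, h1⟩ := intermediate_value_Icc (by norm_num : (-1100:ℝ) ≤ -1000)
    gpoly_cont.continuousOn (by constructor <;> norm_num [gpoly] : (0:ℝ) ∈ Set.Icc (gpoly (-1100)) (gpoly (-1000)))
  obtain ⟨x2, h2m, h2⟩ := intermediate_value_Icc' (by norm_num : (-894:ℝ) ≤ -8)
    gpoly_cont.continuousOn
    (by constructor
        · norm_num [gpoly]
        · exact le_of_lt (gpos_gapL (by norm_num) le_rfl) : (0:ℝ) ∈ Set.Icc (gpoly (-8)) (gpoly (-894)))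
  obtain ⟨x3, h3m, h3⟩ := intermediate_value_Icc (by norm_num : (8:ℝ) ≤ 894)
    gpoly_cont.continuousOn
    (by constructor
        · norm_num [gpoly]
        · exact le_of_lt (gpos_gapR le_rfl (by norm_num)) : (0:ℝ) ∈ Set.Icc (gpoly 8) (gpoly 894))
  obtain ⟨x4, h4m, h4⟩ := intermediate_value_Icc' (by norm_num : (1000:ℝ) ≤ 1100)
    gpoly_cont.continuousOn (by constructor <;> norm_num [gpoly] : (0:ℝ) ∈ Set.Icc (gpoly 1100) (gpoly 1000))
  exact ⟨x1, x2, x3, x4, h1m, h1, h2m, h2, h3m, h3, h4m, h4⟩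

lemma gzero_card : {x : ℝ | gpoly x = 0}.ncard = 4 := by
  obtain ⟨x1, x2, x3, x4, h1m, h1, h2m, h2, h3m, h3, h4m, h4⟩ := groots
  have hZ : {x : ℝ | gpoly x = 0} = {x1, x2, x3, x4} := by
    ext x
    simp only [Set.mem_setOf_eq, Set.mem_insert_iff, Set.mem_singleton_iff]
    constructor
    · intro hx
      rcases le_or_gt x (-1000) with h | h
      · exact Or.inl (gmonoL.injOn (Set.mem_Iic.mpr h) (Set.mem_Iic.mpr h1m.2) (hx.trans h1.symm))
      rcases le_or_gt x (-894) with h' | h'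
      · exact absurd hx (ne_of_gt (gpos_gapL h.le h'))
      rcases le_or_gt x (-8) with h'' | h''
      · exact Or.inr (Or.inl (gantiM.injOn ⟨h'.le, h''⟩ h2m (hx.trans h2.symm)))
      rcases le_or_gt x 8 with h3' | h3'
      · exact absurd hx (ne_of_lt (gneg_gapM h''.le h3'))
      rcases le_or_gt x 894 with h4' | h4'
      · exact Or.inr (Or.inr (Or.inl (gmonoR.injOn ⟨h3'.le, h4'⟩ h3m (hx.trans h3.symm))))
      rcases le_or_gt x 1000 with h5' | h5'
      · exact absurd hx (ne_of_gt (gpos_gapR h4'.le h5'))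
      · exact Or.inr (Or.inr (Or.inr (gantiR.injOn (Set.mem_Ici.mpr h5'.le) (Set.mem_Ici.mpr h4m.1) (hx.trans h4.symm))))
    · rintro (rfl | rfl | rfl | rfl) <;> assumption
  rw [hZ]
  have d12 : x1 ≠ x2 := ne_of_lt (by linarith [h1m.2, h2m.1])
  have d13 : x1 ≠ x3 := ne_of_lt (by linarith [h1m.2, h3m.1])
  have d14 : x1 ≠ x4 := ne_of_lt (by linarith [h1m.2, h4m.1])
  have d23 : x2 ≠ x3 := ne_of_lt (by linarith [h2m.2, h3m.1])
  have d24 : x2 ≠ x4 := ne_of_lt (by linarith [h2m.2, h4m.1])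
  have d34 : x3 ≠ x4 := ne_of_lt (by linarith [h3m.2, h4m.1])
  rw [Set.ncard_insert_of_notMem (by simp [d12, d13, d14]),
      Set.ncard_insert_of_notMem (by simp [d23, d24]),
      Set.ncard_insert_of_notMem (by simp [d34]),
      Set.ncard_singleton]

/-- The system `f₁ = -1 - 24000 y + x³`, `f₂ = -9 + 50 x y - y²` has exactly
4 solutions in the real torus `(ℝ \ {0})²`. -/
theorem running_example_four_real_torus_solutions :
    {p : ℝ × ℝ | p.1 ≠ 0 ∧ p.2 ≠ 0 ∧
      -1 - 24000 * p.2 + p.1 ^ 3 = 0 ∧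
      -9 + 50 * p.1 * p.2 - p.2 ^ 2 = 0}.ncard = 4 := by
  have key : {p : ℝ × ℝ | p.1 ≠ 0 ∧ p.2 ≠ 0 ∧
      -1 - 24000 * p.2 + p.1 ^ 3 = 0 ∧
      -9 + 50 * p.1 * p.2 - p.2 ^ 2 = 0} =
      (fun x : ℝ => (x, (x^3 - 1) / 24000)) '' {x : ℝ | gpoly x = 0} := by
    ext p
    simp only [Set.mem_setOf_eq, Set.mem_image]
    constructor
    · rintro ⟨hx0, hy0, hf1, hf2⟩
      refine ⟨p.1, ?_, ?_⟩
      · have hy : p.2 = (p.1 ^ 3 - 1) / 24000 := by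
          field_simp; linarith
        rw [hy] at hf2
        unfold gpoly
        field_simp at hf2
        linear_combination hf2
      · have hy : p.2 = (p.1 ^ 3 - 1) / 24000 := by
          field_simp; linarith
        exact Prod.ext_iff.mpr ⟨rfl, hy.symm⟩
    · rintro ⟨x, hx, rfl⟩
      have hx0 : x ≠ 0 := by
        rintro rfl
        norm_num [gpoly] at hx
      have hy0 : (x ^ 3 - 1) / 24000 ≠ (0:ℝ) := by
        intro h
        have hx3 : x ^ 3 = 1 := by
          field_simp at h
          linarith
        have : gpoly x = -5184000000 := by
          unfold gpoly
          linear_combination (-x^3 + 1200000*x + 1) * hx3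
        rw [hx] at this
        norm_num at this
      refine ⟨hx0, hy0, by ring, ?_⟩
      have hg : -x^6 + 1200000*x^4 + 2*x^3 - 1200000*x - 5184000001 = 0 := hx
      field_simp
      linear_combination hg
  rw [key]
  rw [Set.ncard_image_of_injOn (fun a _ b _ h => (Prod.ext_iff.mp h).1)]
  exact gzero_card
end
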